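/- Let l ∈ [−1,0], let P = diag(p_1,…,p_m) be a positive diagonal matrix, let K_o = [k_{ij}] ∈ ℝ^{m×m} be a matrix with zero diagonal entries (k_{ii} = 0), and let Υ satisfy the interval bounds. Let Ῡ = [ῡ_{ij}] be the matrix of upper bounds and |K_o| the entrywise absolute value of K_o. Define H_o = ((1+l)/(2+l))·P Ῡ |K_o| + (1/(2+l))·|K_o|ᵀ Ῡᵀ P. Then for every x ∈ ℝ^m: ⌈x⌋^{1+l,T} P Υ K_o x ≤ Σ_{i=1}^m Σ_{j=1}^m |x_i|^{2+l} (H_o)_{ij}, and moreover Σ_{i,j} |x_i|^{2+l} (H_o)_{ij} ≥ 0. -/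
import Mathlib

open Matrix BigOperators Finset

/-- Signed power: ⌈x⌋^d = |x|^d · sign x. -/
noncomputable def spow (x d : ℝ) : ℝ := |x| ^ d * Real.sign x

/-- Υ satisfies the interval bounds. -/
def SatisfiesBounds {m : ℕ} (lo : Fin m → ℝ) (hi : Fin m → Fin m → ℝ)
    (Υ : Matrix (Fin m) (Fin m) ℝ) : Prop :=
  (∀ i, lo i ≤ Υ i i) ∧ ∀ i j, |Υ i j| ≤ hi i j

lemma young_aux (l : ℝ) (hl1 : (-1:ℝ) ≤ l) (hl2 : l ≤ 0) (a b : ℝ) (ha : 0 ≤ a) (hb : 0 ≤ b) :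
    a ^ (1 + l) * b ≤ (1 + l) / (2 + l) * a ^ (2 + l) + 1 / (2 + l) * b ^ (2 + l) := by
  have h2 : (0:ℝ) < 2 + l := by linarith
  have hc1 : 0 ≤ (1 + l) / (2 + l) := div_nonneg (by linarith) h2.le
  have hc2 : 0 ≤ 1 / (2 + l) := by positivity
  have hsum : (1 + l) / (2 + l) + 1 / (2 + l) = 1 := by field_simp; ring
  have key := Real.geom_mean_le_arith_mean2_weighted hc1 hc2
    (Real.rpow_nonneg ha (2 + l)) (Real.rpow_nonneg hb (2 + l)) hsum
  calc a ^ (1 + l) * b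
      = (a ^ (2 + l)) ^ ((1 + l) / (2 + l)) * (b ^ (2 + l)) ^ (1 / (2 + l)) := by
        rw [← Real.rpow_mul ha, ← Real.rpow_mul hb,
          show (2 + l) * ((1 + l) / (2 + l)) = 1 + l by field_simp,
          show (2 + l) * (1 / (2 + l)) = 1 by field_simp,
          Real.rpow_one]
    _ ≤ _ := key

lemma spow_abs_le (x d : ℝ) : |spow x d| ≤ |x| ^ d := by
  rw [spow, abs_mul, abs_of_nonneg (Real.rpow_nonneg (abs_nonneg x) d)]
  have hs : |Real.sign x| ≤ 1 := by
    rcases Real.sign_apply_eq x with h | h | h <;> simp [h]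
  calc |x| ^ d * |Real.sign x| ≤ |x| ^ d * 1 :=
        mul_le_mul_of_nonneg_left hs (Real.rpow_nonneg (abs_nonneg x) d)
    _ = |x| ^ d := mul_one _

theorem stmt4 {m : ℕ} (hm : 1 ≤ m) (l : ℝ) (hl : l ∈ Set.Icc (-1 : ℝ) 0)
    (lo : Fin m → ℝ) (hi : Fin m → Fin m → ℝ)
    (hlo : ∀ i, 0 < lo i) (hhi : ∀ i j, 0 ≤ hi i j) (hdiag : ∀ i, lo i ≤ hi i i)
    (p : Fin m → ℝ) (hp : ∀ i, 0 < p i)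
    (Ko : Matrix (Fin m) (Fin m) ℝ) (hKo : ∀ i, Ko i i = 0)
    (Υ : Matrix (Fin m) (Fin m) ℝ) (hΥ : SatisfiesBounds lo hi Υ)
    (Ῡ absKo Ho : Matrix (Fin m) (Fin m) ℝ)
    (hῩ : Ῡ = Matrix.of fun i j => hi i j)
    (habs : absKo = Matrix.of fun i j => |Ko i j|)
    (hHo : Ho = ((1 + l) / (2 + l)) • (Matrix.diagonal p * Ῡ * absKo) +
        (1 / (2 + l)) • (absKoᵀ * Ῡᵀ * Matrix.diagonal p)) :
    ∀ x : Fin m → ℝ,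
      (∑ i, ∑ j, spow (x i) (1 + l) * ((Matrix.diagonal p * Υ * Ko) i j) * x j ≤
        ∑ i, ∑ j, |x i| ^ (2 + l) * Ho i j) ∧
      0 ≤ ∑ i, ∑ j, |x i| ^ (2 + l) * Ho i j := by
  obtain ⟨hl1, hl2⟩ := hl
  have h2 : (0:ℝ) < 2 + l := by linarith
  have hc1 : 0 ≤ (1 + l) / (2 + l) := div_nonneg (by linarith) h2.le
  have hc2 : 0 ≤ 1 / (2 + l) := by positivity
  intro x
  -- entrywise description of Ho
  have hHoentry : ∀ i j, Ho i j =
      (1 + l) / (2 + l) * ∑ k, p i * hi i k * |Ko k j| +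
      1 / (2 + l) * ∑ k, p j * hi j k * |Ko k i| := by
    intro i j
    have A : (Matrix.diagonal p * Ῡ * absKo) i j = ∑ k, p i * hi i k * |Ko k j| := by
      rw [Matrix.mul_apply]
      apply Finset.sum_congr rfl
      intro k _
      rw [Matrix.diagonal_mul]
      simp [hῩ, habs]
    have B : (absKoᵀ * Ῡᵀ * Matrix.diagonal p) i j = ∑ k, p j * hi j k * |Ko k i| := by
      rw [Matrix.mul_diagonal, Matrix.mul_apply, Finset.sum_mul]
      apply Finset.sum_congr rfl
      intro k _
      simp only [Matrix.transpose_apply, hῩ, habs, Matrix.of_apply]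
      ring
    rw [hHo]
    simp only [Matrix.add_apply, Matrix.smul_apply, smul_eq_mul, A, B]
  have hHononneg : ∀ i j, 0 ≤ Ho i j := by
    intro i j
    rw [hHoentry i j]
    have h : ∀ a b : Fin m, 0 ≤ ∑ k, p a * hi a k * |Ko k b| := fun a b =>
      Finset.sum_nonneg fun k _ =>
        mul_nonneg (mul_nonneg (hp a).le (hhi a k)) (abs_nonneg _)
    exact add_nonneg (mul_nonneg hc1 (h i j)) (mul_nonneg hc2 (h j i))
  have hnn : 0 ≤ ∑ i, ∑ j, |x i| ^ (2 + l) * Ho i j :=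
    Finset.sum_nonneg fun i _ => Finset.sum_nonneg fun j _ =>
      mul_nonneg (Real.rpow_nonneg (abs_nonneg _) _) (hHononneg i j)
  refine ⟨?_, hnn⟩
  -- rewrite RHS as a triple sum
  have hRHS : ∑ i, ∑ j, |x i| ^ (2 + l) * Ho i j =
      ∑ i, ∑ j, ∑ k, p i * hi i k * |Ko k j| *
        ((1 + l) / (2 + l) * |x i| ^ (2 + l) + 1 / (2 + l) * |x j| ^ (2 + l)) := by
    have e1 : ∑ i, ∑ j, |x i| ^ (2 + l) * Ho i j =
        (∑ i, ∑ j, (1 + l) / (2 + l) * |x i| ^ (2 + l) * ∑ k, p i * hi i k * |Ko k j|) +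
        (∑ i, ∑ j, 1 / (2 + l) * |x i| ^ (2 + l) * ∑ k, p j * hi j k * |Ko k i|) := by
      rw [← Finset.sum_add_distrib]
      apply Finset.sum_congr rfl; intro i _
      rw [← Finset.sum_add_distrib]
      apply Finset.sum_congr rfl; intro j _
      rw [hHoentry i j]; ring
    have e2 : (∑ i, ∑ j, 1 / (2 + l) * |x i| ^ (2 + l) * ∑ k, p j * hi j k * |Ko k i|) =
        ∑ i, ∑ j, 1 / (2 + l) * |x j| ^ (2 + l) * ∑ k, p i * hi i k * |Ko k j| :=
      Finset.sum_comm
    rw [e1, e2, ← Finset.sum_add_distrib]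
    apply Finset.sum_congr rfl; intro i _
    rw [← Finset.sum_add_distrib]
    apply Finset.sum_congr rfl; intro j _
    rw [Finset.mul_sum, Finset.mul_sum, ← Finset.sum_add_distrib]
    apply Finset.sum_congr rfl; intro k _
    ring
  rw [hRHS]
  -- rewrite LHS as a triple sum and bound termwise
  have hLHS : ∀ i j, spow (x i) (1 + l) * ((Matrix.diagonal p * Υ * Ko) i j) * x j =
      ∑ k, spow (x i) (1 + l) * (p i * Υ i k * Ko k j) * x j := by
    intro i j
    rw [Matrix.mul_apply, Finset.mul_sum, Finset.sum_mul]
    apply Finset.sum_congr rfl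
    intro k _
    rw [Matrix.diagonal_mul]
  simp only [hLHS]
  apply Finset.sum_le_sum; intro i _
  apply Finset.sum_le_sum; intro j _
  apply Finset.sum_le_sum; intro k _
  have hC : 0 ≤ p i * hi i k * |Ko k j| :=
    mul_nonneg (mul_nonneg (hp i).le (hhi i k)) (abs_nonneg _)
  calc spow (x i) (1 + l) * (p i * Υ i k * Ko k j) * x j
      ≤ |spow (x i) (1 + l) * (p i * Υ i k * Ko k j) * x j| := le_abs_self _
    _ ≤ |x i| ^ (1 + l) * (p i * hi i k * |Ko k j|) * |x j| := by
        rw [abs_mul, abs_mul]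
        have e1 : |spow (x i) (1 + l)| ≤ |x i| ^ (1 + l) := spow_abs_le _ _
        have e2 : |p i * Υ i k * Ko k j| ≤ p i * hi i k * |Ko k j| := by
          rw [abs_mul, abs_mul, abs_of_pos (hp i)]
          gcongr
          · exact (hp i).le
          · exact hΥ.2 i k
        have h3 : 0 ≤ |spow (x i) (1 + l)| := abs_nonneg _
        exact mul_le_mul_of_nonneg_right
          (mul_le_mul e1 e2 (abs_nonneg _) (Real.rpow_nonneg (abs_nonneg _) _))
          (abs_nonneg _)
    _ = (p i * hi i k * |Ko k j|) * (|x i| ^ (1 + l) * |x j|) := by ring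
    _ ≤ (p i * hi i k * |Ko k j|) *
        ((1 + l) / (2 + l) * |x i| ^ (2 + l) + 1 / (2 + l) * |x j| ^ (2 + l)) :=
        mul_le_mul_of_nonneg_left
          (young_aux l hl1 hl2 _ _ (abs_nonneg _) (abs_nonneg _)) hC
    _ = _ := by ring
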